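/- Let Z be the symmetric 3×3 real matrix with entries Z₁₁ = −|α₁₂−α₂₃|²/2, Z₂₂ = −|α₁₂+α₂₃|²/2, Z₃₃ = −|α₁₃|², Z₁₂ = Im(conj(α₁₂)α₂₃), Z₁₃ = (1/√2)·Re(α₁₂·conj(α₁₃) − α₁₃·conj(α₂₃)), Z₂₃ = (1/√2)·Im(α₁₃·(conj(α₁₂)+conj(α₂₃))), where |α₁₂|²+|α₁₃|²+|α₂₃|² = 1. Then det(Z) = 0 and the nonzero eigenvalues of Z have absolute values (1/2)·|1 ± |α₁₃² − 2α₁₂α₂₃||; in particular the sum of squares of the two largest singular values of Z equals (1 + |α₁₃² − 2α₁₂α₂₃|²)/2. -/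

import Mathlib

/-- The spin-1 correlation matrix of the antisymmetric pure two-qutrit state
with coefficients `a12, a13, a23`. -/
noncomputable def Zmat (a12 a13 a23 : ℂ) : Matrix (Fin 3) (Fin 3) ℝ :=
  !![-(‖a12 - a23‖) ^ 2 / 2,
       Complex.im ((starRingEnd ℂ) a12 * a23),
       (Real.sqrt 2)⁻¹ * Complex.re (a12 * (starRingEnd ℂ) a13 - a13 * (starRingEnd ℂ) a23);
     Complex.im ((starRingEnd ℂ) a12 * a23),
       -(‖a12 + a23‖) ^ 2 / 2,
       (Real.sqrt 2)⁻¹ * Complex.im (a13 * ((starRingEnd ℂ) a12 + (starRingEnd ℂ) a23));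
     (Real.sqrt 2)⁻¹ * Complex.re (a12 * (starRingEnd ℂ) a13 - a13 * (starRingEnd ℂ) a23),
       (Real.sqrt 2)⁻¹ * Complex.im (a13 * ((starRingEnd ℂ) a12 + (starRingEnd ℂ) a23)),
       -(‖a13‖) ^ 2]

open Polynomial in
theorem asym_correlation_matrix_spectrum (a12 a13 a23 : ℂ)
    (h : ‖a12‖ ^ 2 + ‖a13‖ ^ 2 + ‖a23‖ ^ 2 = 1) :
    (Zmat a12 a13 a23).det = 0 ∧
    (Zmat a12 a13 a23).charpoly =
      X * (X + C ((1 + ‖a13 ^ 2 - 2 * a12 * a23‖) / 2)) *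
        (X + C ((1 - ‖a13 ^ 2 - 2 * a12 * a23‖) / 2)) ∧
    ((1 + ‖a13 ^ 2 - 2 * a12 * a23‖) / 2) ^ 2 +
        ((1 - ‖a13 ^ 2 - 2 * a12 * a23‖) / 2) ^ 2 =
      (1 + ‖a13 ^ 2 - 2 * a12 * a23‖ ^ 2) / 2 := by
  have hs : ((Real.sqrt 2)⁻¹) ^ 2 = 1/2 := by
    rw [inv_pow, Real.sq_sqrt (by norm_num : (0:ℝ) ≤ 2)]; norm_num
  have h' : a12.re*a12.re + a12.im*a12.im + (a13.re*a13.re + a13.im*a13.im)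
      + (a23.re*a23.re + a23.im*a23.im) = 1 := by
    simpa [Complex.sq_norm, Complex.normSq_apply] using h
  refine ⟨?_, ?_, by ring⟩
  · rw [Zmat, Matrix.det_fin_three]
    simp only [Matrix.cons_val_zero, Matrix.cons_val_one, Matrix.cons_val_two,
      Matrix.head_cons, Matrix.tail_cons, Matrix.of_apply,
      Complex.sq_norm, Complex.normSq_apply, Complex.mul_re, Complex.mul_im, Complex.sub_re,
      Complex.sub_im, Complex.add_re, Complex.add_im, Complex.conj_re, Complex.conj_im]
    ring_nf
    rw [hs]
    ring
  · apply Polynomial.funext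
    intro x
    rw [Matrix.charpoly, Matrix.det_fin_three]
    simp only [Matrix.charmatrix_apply, Matrix.diagonal_apply,
      Zmat, Matrix.cons_val_zero, Matrix.cons_val_one, Matrix.cons_val_two,
      Matrix.head_cons, Matrix.tail_cons, Matrix.of_apply,
      Polynomial.eval_mul, Polynomial.eval_add, Polynomial.eval_sub, Polynomial.eval_neg,
      Polynomial.eval_X, Polynomial.eval_C, reduceIte,
      show (0:Fin 3) ≠ 1 by decide, show (0:Fin 3) ≠ 2 by decide, show (1:Fin 3) ≠ 0 by decide,
      show (1:Fin 3) ≠ 2 by decide, show (2:Fin 3) ≠ 0 by decide, show (2:Fin 3) ≠ 1 by decide,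
      if_true, if_neg, Polynomial.eval_zero]
    ring_nf
    rw [hs]
    simp only [Complex.sq_norm, Complex.normSq_apply, Complex.mul_re, Complex.mul_im,
      Complex.sub_re, Complex.sub_im, Complex.add_re, Complex.add_im, Complex.conj_re,
      Complex.conj_im, Complex.re_ofNat, Complex.im_ofNat, Complex.neg_re, Complex.neg_im,
      pow_two, Complex.norm_mul_self_eq_normSq]
    ring_nf
    linear_combination (x^2 + (a12.re*a12.re + a12.im*a12.im + (a13.re*a13.re + a13.im*a13.im)
        + (a23.re*a23.re + a23.im*a23.im) + 1)*x/4) * h'
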